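/- Fix a positive integer n, reals 0 < p < q < 1, integers k ∈ {0,…,n} and t ∈ {1,…,n−k}. If X_p ~ Bin(n,p) and X_q ~ Bin(n,q), then P[X_p ≥ k+t | X_p ≥ k] ≤ P[X_q ≥ k+t | X_q ≥ k]. -/
import Mathlib


/-- The binomial probability mass function: `P[Bin(n,p) = k]`. -/
noncomputable def binomialPMF (n : ℕ) (p : ℝ) (k : ℕ) : ℝ :=
  (n.choose k : ℝ) * p ^ k * (1 - p) ^ (n - k)

/-- The upper tail `P[Bin(n,p) ≥ m]`. -/
noncomputable def binomialTail (n : ℕ) (p : ℝ) (m : ℕ) : ℝ :=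
  ∑ j ∈ Finset.Icc m n, binomialPMF n p j

lemma binomialPMF_pos (n : ℕ) (p : ℝ) (hp : 0 < p) (hp1 : p < 1) {j : ℕ} (hj : j ≤ n) :
    0 < binomialPMF n p j := by
  have hc : 0 < (n.choose j : ℝ) := by exact_mod_cast Nat.choose_pos hj
  exact mul_pos (mul_pos hc (pow_pos hp j)) (pow_pos (by linarith) _)

lemma binomialTail_pos (n : ℕ) (p : ℝ) (hp : 0 < p) (hp1 : p < 1) {m : ℕ} (hm : m ≤ n) :
    0 < binomialTail n p m := by
  apply Finset.sum_pos
  · intro j hj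
    exact binomialPMF_pos n p hp hp1 (Finset.mem_Icc.mp hj).2
  · exact ⟨n, Finset.mem_Icc.mpr ⟨hm, le_rfl⟩⟩

lemma binomialPMF_mlr (n : ℕ) (p q : ℝ) (hp : 0 < p) (hpq : p < q) (hq : q < 1)
    (i j : ℕ) (hji : j ≤ i) (hin : i ≤ n) :
    binomialPMF n p i * binomialPMF n q j ≤ binomialPMF n q i * binomialPMF n p j := by
  obtain ⟨d, rfl⟩ := Nat.exists_eq_add_of_le hji
  have hq0 : 0 < q := hp.trans hpq
  have hp1 : p < 1 := hpq.trans hq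
  have hnj : n - j = (n - (j + d)) + d := by omega
  have hL : binomialPMF n p (j + d) * binomialPMF n q j
      = ((n.choose (j + d) : ℝ) * (n.choose j) * (p * q) ^ j
          * ((1 - p) * (1 - q)) ^ (n - (j + d))) * (p * (1 - q)) ^ d := by
    unfold binomialPMF; rw [hnj]; simp only [mul_pow, pow_add]; ring
  have hR : binomialPMF n q (j + d) * binomialPMF n p j
      = ((n.choose (j + d) : ℝ) * (n.choose j) * (p * q) ^ j
          * ((1 - p) * (1 - q)) ^ (n - (j + d))) * (q * (1 - p)) ^ d := by
    unfold binomialPMF; rw [hnj]; simp only [mul_pow, pow_add]; ring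
  rw [hL, hR]
  have key : (p * (1 - q)) ^ d ≤ (q * (1 - p)) ^ d :=
    pow_le_pow_left₀ (by nlinarith) (by nlinarith) d
  have hnn : 0 ≤ (n.choose (j + d) : ℝ) * (n.choose j) * (p * q) ^ j
      * ((1 - p) * (1 - q)) ^ (n - (j + d)) :=
    mul_nonneg (mul_nonneg (by positivity) (pow_nonneg (by positivity) j))
      (pow_nonneg (by nlinarith) _)
  exact mul_le_mul_of_nonneg_left key hnn

/-- `P[X_p ≥ k+t | X_p ≥ k] ≤ P[X_q ≥ k+t | X_q ≥ k]` for `p < q`. -/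
theorem binomial_cond_tail_monotone
    (n : ℕ) (hn : 0 < n) (p q : ℝ) (hp : 0 < p) (hpq : p < q) (hq : q < 1)
    (k t : ℕ) (hk : k ≤ n) (ht1 : 1 ≤ t) (ht : t ≤ n - k) :
    binomialTail n p (k + t) / binomialTail n p k
      ≤ binomialTail n q (k + t) / binomialTail n q k := by
  have hkt : k + t ≤ n := by omega
  have hp1 : p < 1 := hpq.trans hq
  have hq0 : 0 < q := hp.trans hpq
  have split : ∀ r : ℝ, binomialTail n r k
      = (∑ j ∈ Finset.Ico k (k + t), binomialPMF n r j) + binomialTail n r (k + t) := by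
    intro r
    unfold binomialTail
    rw [← Finset.Ico_add_one_right_eq_Icc, ← Finset.Ico_add_one_right_eq_Icc,
      ← Finset.sum_Ico_consecutive _ (by omega : k ≤ k + t) (by omega : k + t ≤ n + 1)]
  have cross : binomialTail n p (k + t) * (∑ j ∈ Finset.Ico k (k + t), binomialPMF n q j)
      ≤ binomialTail n q (k + t) * (∑ j ∈ Finset.Ico k (k + t), binomialPMF n p j) := by
    unfold binomialTail
    rw [Finset.sum_mul_sum, Finset.sum_mul_sum]
    apply Finset.sum_le_sum
    intro i hi
    apply Finset.sum_le_sum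
    intro j hj
    rw [Finset.mem_Icc] at hi
    rw [Finset.mem_Ico] at hj
    exact binomialPMF_mlr n p q hp hpq hq i j (by omega) hi.2
  rw [div_le_div_iff₀ (binomialTail_pos n p hp hp1 hk) (binomialTail_pos n q hq0 hq hk),
    split p, split q]
  nlinarith [cross]
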